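/- Let G be a finite graph, X ⊂ V(G) inducing an acyclic subgraph whose connected components T_1,...,T_p each have λ as an eigenvalue of their induced Jacobi matrix, and suppose p - |∂X| > 0. Let U : E(G) → U(n) be unitary edge weights with U_{ě} = U_e^*. Then λ is an eigenvalue of the unitary-weighted Jacobi operator A_{G,U} on ℂ^V ⊗ ℂ^n with multiplicity at least n(p - |∂X|). -/

import Mathlib

open scoped Matrix
open SimpleGraph

namespace Stmt3Aux

variable {V : Type*} {n : ℕ} {G : SimpleGraph V}

/-- Product of transport matrices along a walk: a vector at the start is carried to the end. -/
noncomputable def wprod (M : V → V → Matrix (Fin n) (Fin n) ℂ) :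
    ∀ {a b : V}, G.Walk a b → Matrix (Fin n) (Fin n) ℂ
  | _, _, .nil => 1
  | a, _, .cons (v := c) _ p => wprod M p * M c a

@[simp] lemma wprod_nil (M : V → V → Matrix (Fin n) (Fin n) ℂ) {a : V} :
    wprod M (SimpleGraph.Walk.nil : G.Walk a a) = 1 := rfl

@[simp] lemma wprod_cons (M : V → V → Matrix (Fin n) (Fin n) ℂ) {a c b : V}
    (h : G.Adj a c) (p : G.Walk c b) :
    wprod M (SimpleGraph.Walk.cons h p) = wprod M p * M c a := rfl

lemma wprod_append (M : V → V → Matrix (Fin n) (Fin n) ℂ) {a b d : V}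
    (p : G.Walk a b) (q : G.Walk b d) :
    wprod M (p.append q) = wprod M q * wprod M p := by
  induction p with
  | nil => simp
  | cons h p ih => simp [ih, mul_assoc]

lemma wprod_concat (M : V → V → Matrix (Fin n) (Fin n) ℂ) {a b d : V}
    (p : G.Walk a b) (h : G.Adj b d) :
    wprod M (p.concat h) = M d b * wprod M p := by
  rw [SimpleGraph.Walk.concat_eq_append, wprod_append]
  simp

lemma wprod_copy (M : V → V → Matrix (Fin n) (Fin n) ℂ) {a b a' b' : V}
    (p : G.Walk a b) (ha : a = a') (hb : b = b') :
    wprod M (p.copy ha hb) = wprod M p := by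
  subst ha; subst hb; rfl

lemma wprod_mem_unitary (M : V → V → Matrix (Fin n) (Fin n) ℂ)
    (hM : ∀ a b : V, G.Adj a b → M b a ∈ Matrix.unitaryGroup (Fin n) ℂ)
    {a b : V} (p : G.Walk a b) : wprod M p ∈ Matrix.unitaryGroup (Fin n) ℂ := by
  induction p with
  | nil => exact one_mem _
  | cons h p ih => exact mul_mem ih (hM _ _ h)

lemma isPath_concat {a b d : V} {p : G.Walk a b} (hp : p.IsPath) (h : G.Adj b d)
    (hd : d ∉ p.support) : (p.concat h).IsPath := by
  rw [SimpleGraph.Walk.concat_eq_append]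
  rw [SimpleGraph.Walk.isPath_def] at hp ⊢
  rw [SimpleGraph.Walk.support_append]
  simp only [SimpleGraph.Walk.support_cons, SimpleGraph.Walk.support_nil]
  simp [List.nodup_append, hp, hd]
  exact fun x hx hxd => hd (hxd ▸ hx)

lemma wprod_gauge [DecidableEq V] (hacyc : G.IsAcyclic) (M : V → V → Matrix (Fin n) (Fin n) ℂ)
    (hinv : ∀ a b : V, G.Adj a b → M b a * M a b = 1)
    {r u v : V} (h : G.Adj u v) (p : G.Walk r u) (q : G.Walk r v)
    (hp : p.IsPath) (hq : q.IsPath) :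
    wprod M q = M v u * wprod M p := by
  by_cases hv : v ∈ p.support
  · have htake : (p.takeUntil v hv).IsPath := hp.takeUntil hv
    have hdrop : (p.dropUntil v hv).IsPath := hp.dropUntil hv
    have hsingle : (SimpleGraph.Walk.cons h.symm SimpleGraph.Walk.nil : G.Walk v u).IsPath := by
      simp [SimpleGraph.Walk.cons_isPath_iff, h.ne']
    have hqe : q = p.takeUntil v hv := by
      have := hacyc.path_unique ⟨q, hq⟩ ⟨p.takeUntil v hv, htake⟩
      exact congrArg Subtype.val this
    have hde : p.dropUntil v hv = SimpleGraph.Walk.cons h.symm SimpleGraph.Walk.nil := by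
      have := hacyc.path_unique ⟨p.dropUntil v hv, hdrop⟩
        ⟨SimpleGraph.Walk.cons h.symm SimpleGraph.Walk.nil, hsingle⟩
      exact congrArg Subtype.val this
    have hps : wprod M p = M u v * wprod M q := by
      conv_lhs => rw [← p.take_spec hv]
      rw [wprod_append, hde, hqe]
      simp
    rw [hps, ← mul_assoc, hinv u v h, one_mul]
  · have hconc : (p.concat h).IsPath := isPath_concat hp h hv
    have hqe : q = p.concat h := by
      have := hacyc.path_unique ⟨q, hq⟩ ⟨p.concat h, hconc⟩
      exact congrArg Subtype.val this
    rw [hqe, wprod_concat]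

end Stmt3Aux

/-- Under the hypotheses of the converse Aomoto theorem (a vertex set `X`
inducing an acyclic subgraph whose `p` components each carry a `lam`-eigenvector of the
scalar Jacobi matrix, with `p - |∂X| > 0`), the unitary-weighted Jacobi operator obtained
by twisting each edge by a unitary `U u v ∈ U(n)` (`U v u = (U u v)ᴴ`) has `lam` as an
eigenvalue with multiplicity at least `n * (p - |∂X|)`. -/
theorem stmt_3 {V : Type*} [Fintype V] [DecidableEq V] (G : SimpleGraph V)
    (A : Matrix V V ℂ) (hHerm : A.IsHermitian)
    (hsupp : ∀ u v : V, u ≠ v → ¬ G.Adj u v → A u v = 0)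
    (X : Set V) (hacyc : (G.induce X).IsAcyclic)
    (lam : ℝ)
    (hcomp : ∀ c : (G.induce X).ConnectedComponent,
      ∃ η : V → ℂ, η ≠ 0 ∧
        (∀ v : V, (¬ ∃ h : v ∈ X, (G.induce X).connectedComponentMk ⟨v, h⟩ = c) → η v = 0) ∧
        (∀ v : V, ∀ h : v ∈ X, (G.induce X).connectedComponentMk ⟨v, h⟩ = c →
          A.mulVec η v = (lam : ℂ) * η v))
    (hpos : ({v : V | v ∉ X ∧ ∃ u ∈ X, G.Adj u v}).ncard
      < Nat.card (G.induce X).ConnectedComponent)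
    (n : ℕ) (U : V → V → Matrix (Fin n) (Fin n) ℂ)
    (hUuni : ∀ u v : V, G.Adj u v → U u v ∈ Matrix.unitaryGroup (Fin n) ℂ)
    (hUsym : ∀ u v : V, U v u = (U u v)ᴴ)
    (B : Matrix (V × Fin n) (V × Fin n) ℂ)
    (hB : ∀ p q : V × Fin n, B p q =
      if p.1 = q.1 then (if p.2 = q.2 then A p.1 p.1 else 0)
      else A p.1 q.1 * U p.1 q.1 p.2 q.2) :
    n * (Nat.card (G.induce X).ConnectedComponent
        - ({v : V | v ∉ X ∧ ∃ u ∈ X, G.Adj u v}).ncard)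
      ≤ Module.finrank ℂ
        ↥(LinearMap.ker
          ((lam : ℂ) • (LinearMap.id : (V × Fin n → ℂ) →ₗ[ℂ] (V × Fin n → ℂ)) -
            Matrix.toLin' B)) := by
  classical
  set S : Set V := {v : V | v ∉ X ∧ ∃ u ∈ X, G.Adj u v} with hSdef
  set H : SimpleGraph ↥X := G.induce X with hHdef
  haveI : Fintype ↥X := Set.Finite.fintype (Set.toFinite X)
  haveI : Finite H.ConnectedComponent := Quot.finite _
  haveI : Fintype H.ConnectedComponent := Fintype.ofFinite _
  haveI : Fintype ↥S := Set.Finite.fintype (Set.toFinite S)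
  -- choose roots of components
  obtain ⟨root, hroot⟩ : ∃ root : H.ConnectedComponent → ↥X,
      ∀ c, H.connectedComponentMk (root c) = c := by
    choose f hf using fun c : H.ConnectedComponent => c.exists_rep
    exact ⟨f, hf⟩
  -- choose eigenvectors
  choose η hη0 hηsupp hηeig using hcomp
  -- adjacency in the induced graph
  have hadjH : ∀ (u v : ↥X), H.Adj u v ↔ G.Adj u.1 v.1 := by
    intro u v; rw [hHdef]; exact Iff.rfl
  -- chosen paths from roots
  have hrea : ∀ v : ↥X, H.Reachable (root (H.connectedComponentMk v)) v := by
    intro v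
    exact (SimpleGraph.ConnectedComponent.eq).mp (hroot (H.connectedComponentMk v))
  let pw : ∀ v : ↥X, H.Walk (root (H.connectedComponentMk v)) v :=
    fun v => ((hrea v).some).toPath
  have hpw : ∀ v, (pw v).IsPath := fun v => ((hrea v).some).toPath.property
  -- transport matrices
  set M : ↥X → ↥X → Matrix (Fin n) (Fin n) ℂ := fun x y => U x.1 y.1 with hMdef
  have hMuni : ∀ a b : ↥X, H.Adj a b → M b a ∈ Matrix.unitaryGroup (Fin n) ℂ := by
    intro a b hab
    exact hUuni b.1 a.1 ((hadjH a b).mp hab).symm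
  have hMinv : ∀ a b : ↥X, H.Adj a b → M b a * M a b = 1 := by
    intro a b hab
    have h1 : G.Adj a.1 b.1 := (hadjH a b).mp hab
    have h2 := hUuni a.1 b.1 h1
    have := (Unitary.mem_iff.mp h2).1
    rw [hMdef]
    simp only
    rw [hUsym a.1 b.1, ← Matrix.star_eq_conjTranspose]
    exact this
  set g : ↥X → Matrix (Fin n) (Fin n) ℂ := fun v => Stmt3Aux.wprod M (pw v) with hgdef
  have hguni : ∀ v : ↥X, g v ∈ Matrix.unitaryGroup (Fin n) ℂ :=
    fun v => Stmt3Aux.wprod_mem_unitary M hMuni _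
  have hgauge : ∀ u v : ↥X, H.Adj u v → g v = M v u * g u := by
    intro u v hadj
    have hc : H.connectedComponentMk u = H.connectedComponentMk v :=
      SimpleGraph.ConnectedComponent.sound hadj.reachable
    have hcr : root (H.connectedComponentMk u) = root (H.connectedComponentMk v) := by rw [hc]
    have hmain := Stmt3Aux.wprod_gauge hacyc M hMinv hadj ((pw u).copy hcr rfl) (pw v)
      ((SimpleGraph.Walk.isPath_copy _ _ _).mpr (hpw u)) (hpw v)
    rw [Stmt3Aux.wprod_copy] at hmain
    exact hmain
  -- the candidate linear map
  let Φ : (H.ConnectedComponent × Fin n → ℂ) →ₗ[ℂ] (V × Fin n → ℂ) :=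
    { toFun := fun ξ q =>
        if h : q.1 ∈ X then
          η (H.connectedComponentMk ⟨q.1, h⟩) q.1 *
            ∑ j, g ⟨q.1, h⟩ q.2 j * ξ (H.connectedComponentMk ⟨q.1, h⟩, j)
        else 0
      map_add' := by
        intro x y; funext q
        by_cases h : q.1 ∈ X
        · simp only [Pi.add_apply, dif_pos h]
          rw [← mul_add, ← Finset.sum_add_distrib]
          congr 1
          exact Finset.sum_congr rfl fun j _ => by ring
        · simp [dif_neg h]
      map_smul' := by
        intro a x; funext q
        by_cases h : q.1 ∈ X
        · simp only [Pi.smul_apply, smul_eq_mul, RingHom.id_apply, dif_pos h]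
          simp only [Finset.mul_sum]
          exact Finset.sum_congr rfl fun j _ => by ring
        · simp [dif_neg h] }
  have hΦapp : ∀ (ξ) (v : V) (i : Fin n) (h : v ∈ X),
      Φ ξ (v, i) = η (H.connectedComponentMk ⟨v, h⟩) v *
        ∑ j, g ⟨v, h⟩ i j * ξ (H.connectedComponentMk ⟨v, h⟩, j) := by
    intro ξ v i h
    show dite _ _ _ = _
    rw [dif_pos h]
  have hΦapp0 : ∀ (ξ) (v : V) (i : Fin n), v ∉ X → Φ ξ (v, i) = 0 := by
    intro ξ v i h
    show dite _ _ _ = _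
    rw [dif_neg h]
  have hΦinj : Function.Injective Φ := by
    refine (injective_iff_map_eq_zero Φ).mpr ?_
    intro ξ hξ
    funext q
    obtain ⟨c, j⟩ := q
    obtain ⟨v0, hv0⟩ : ∃ v0, η c v0 ≠ 0 := Function.ne_iff.mp (hη0 c)
    have hex : ∃ h : v0 ∈ X, H.connectedComponentMk ⟨v0, h⟩ = c := by
      by_contra hcon
      exact hv0 (hηsupp c v0 hcon)
    obtain ⟨hv0X, hv0c⟩ := hex
    have hvec : ∀ i, ∑ k, g ⟨v0, hv0X⟩ i k * ξ (c, k) = 0 := by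
      intro i
      have h1 := congrFun hξ (v0, i)
      rw [hΦapp ξ v0 i hv0X, hv0c, Pi.zero_apply] at h1
      rcases mul_eq_zero.mp h1 with h | h
      · exact absurd h hv0
      · exact h
    have hker : (fun k => ξ (c, k)) = 0 := by
      have hg := hguni ⟨v0, hv0X⟩
      have h1 : (g ⟨v0, hv0X⟩).mulVec (fun k => ξ (c, k)) = 0 := by
        funext i
        simpa [Matrix.mulVec, dotProduct] using hvec i
      have h2 := congrArg (fun w => (star (g ⟨v0, hv0X⟩)).mulVec w) h1
      simpa [Matrix.mulVec_mulVec, (Unitary.mem_iff.mp hg).1, Matrix.one_mulVec,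
        Matrix.mulVec_zero] using h2
    exact congrFun hker j
  -- the key computation: B acts like lam away from the boundary S
  have hBmul : ∀ (ξ : H.ConnectedComponent × Fin n → ℂ) (v : V) (i : Fin n), v ∉ S →
      B.mulVec (Φ ξ) (v, i) = (lam : ℂ) * Φ ξ (v, i) := by
    intro ξ v i hvS
    have hsum : B.mulVec (Φ ξ) (v, i) = ∑ u : V, ∑ j : Fin n, B (v, i) (u, j) * Φ ξ (u, j) := by
      simp [Matrix.mulVec, dotProduct, Fintype.sum_prod_type]
    by_cases hvX : v ∈ X
    · set c := H.connectedComponentMk ⟨v, hvX⟩ with hcdef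
      set s : ℂ := ∑ j, g ⟨v, hvX⟩ i j * ξ (c, j) with hsdef
      have hterm : ∀ u : V, (∑ j, B (v, i) (u, j) * Φ ξ (u, j)) = A v u * η c u * s := by
        intro u
        by_cases huv : u = v
        · subst huv
          have hdiag : ∀ j, B (u, i) (u, j) * Φ ξ (u, j) =
              (if i = j then A u u * Φ ξ (u, i) else 0) := by
            intro j
            rw [hB]
            dsimp only
            rw [if_pos rfl]
            by_cases hij : i = j
            · subst hij; simp
            · simp [hij]
          rw [Finset.sum_congr rfl fun j _ => hdiag j, Finset.sum_ite_eq]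
          rw [if_pos (Finset.mem_univ i), hΦapp ξ u i hvX, ← hcdef, ← hsdef]
          ring
        · have hBvu : ∀ j, B (v, i) (u, j) = A v u * U v u i j := by
            intro j
            rw [hB]
            dsimp only
            rw [if_neg (Ne.symm huv)]
          by_cases hA : A v u = 0
          · simp [hBvu, hA]
          · have hadj : G.Adj v u := by
              by_contra hno
              exact hA (hsupp v u (Ne.symm huv) hno)
            by_cases huX : u ∈ X
            · have hHadj : H.Adj ⟨u, huX⟩ ⟨v, hvX⟩ := (hadjH _ _).mpr hadj.symm
              have hcc : H.connectedComponentMk ⟨u, huX⟩ = c := by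
                rw [hcdef]
                exact SimpleGraph.ConnectedComponent.sound hHadj.reachable
              have hgv : g ⟨v, hvX⟩ = M ⟨v, hvX⟩ ⟨u, huX⟩ * g ⟨u, huX⟩ := hgauge _ _ hHadj
              calc ∑ j, B (v, i) (u, j) * Φ ξ (u, j)
                  = ∑ j, A v u * U v u i j * (η c u * ∑ k, g ⟨u, huX⟩ j k * ξ (c, k)) := by
                    refine Finset.sum_congr rfl fun j _ => ?_
                    rw [hBvu j, hΦapp ξ u j huX, hcc]
                _ = A v u * η c u * ∑ j, ∑ k, U v u i j * (g ⟨u, huX⟩ j k * ξ (c, k)) := by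
                    rw [Finset.mul_sum]
                    refine Finset.sum_congr rfl fun j _ => ?_
                    rw [← Finset.mul_sum]
                    ring
                _ = A v u * η c u * ∑ k, (∑ j, U v u i j * g ⟨u, huX⟩ j k) * ξ (c, k) := by
                    congr 1
                    rw [Finset.sum_comm]
                    refine Finset.sum_congr rfl fun k _ => ?_
                    rw [Finset.sum_mul]
                    exact Finset.sum_congr rfl fun j _ => by ring
                _ = A v u * η c u * s := by
                    rw [hsdef]
                    congr 1
                    refine Finset.sum_congr rfl fun k _ => ?_
                    congr 1
                    have hmul : (M ⟨v, hvX⟩ ⟨u, huX⟩ * g ⟨u, huX⟩) i k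
                        = ∑ j, U v u i j * g ⟨u, huX⟩ j k := by
                      rw [Matrix.mul_apply]
                    rw [← hmul, ← hgv]
            · have hη0u : η c u = 0 := hηsupp c u (fun ⟨h, _⟩ => huX h)
              simp [hBvu, hΦapp0 ξ u _ huX, hη0u]
      calc B.mulVec (Φ ξ) (v, i) = ∑ u, A v u * η c u * s := by
            rw [hsum]
            exact Finset.sum_congr rfl fun u _ => hterm u
        _ = (∑ u, A v u * η c u) * s := by rw [Finset.sum_mul]
        _ = (lam : ℂ) * η c v * s := by
            have heig := hηeig c v hvX hcdef.symm
            have hmv : (∑ u, A v u * η c u) = (lam : ℂ) * η c v := by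
              rw [← heig]
              rfl
            rw [hmv]
        _ = (lam : ℂ) * Φ ξ (v, i) := by
            rw [hΦapp ξ v i hvX, ← hcdef, ← hsdef]
            ring
    · have hΦ0 : Φ ξ (v, i) = 0 := hΦapp0 ξ v i hvX
      rw [hΦ0, mul_zero, hsum]
      refine Finset.sum_eq_zero fun u _ => Finset.sum_eq_zero fun j _ => ?_
      by_cases huv : u = v
      · subst huv
        rw [hΦapp0 ξ u j hvX, mul_zero]
      · by_cases huX : u ∈ X
        · have hnadj : ¬ G.Adj v u := by
            intro hadj
            exact hvS ⟨hvX, u, huX, hadj.symm⟩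
          have hB0 : B (v, i) (u, j) = 0 := by
            rw [hB]
            dsimp only
            rw [if_neg (Ne.symm huv), hsupp v u (Ne.symm huv) hnadj, zero_mul]
          rw [hB0, zero_mul]
        · rw [hΦapp0 ξ u j huX, mul_zero]
  -- assemble everything
  set L : (V × Fin n → ℂ) →ₗ[ℂ] (V × Fin n → ℂ) :=
    (lam : ℂ) • (LinearMap.id : (V × Fin n → ℂ) →ₗ[ℂ] (V × Fin n → ℂ)) - Matrix.toLin' B
    with hLdef
  have hLapp : ∀ (f : V × Fin n → ℂ) (q : V × Fin n),
      L f q = (lam : ℂ) * f q - B.mulVec f q := by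
    intro f q
    simp [hLdef, LinearMap.sub_apply, LinearMap.smul_apply, LinearMap.id_apply,
      Matrix.toLin'_apply, Pi.smul_apply, Pi.sub_apply, smul_eq_mul]
  have hLΦ : ∀ (ξ : H.ConnectedComponent × Fin n → ℂ) (v : V) (i : Fin n), v ∉ S →
      L (Φ ξ) (v, i) = 0 := by
    intro ξ v i hv
    rw [hLapp, hBmul ξ v i hv, sub_self]
  let π : (V × Fin n → ℂ) →ₗ[ℂ] (↥S × Fin n → ℂ) :=
    LinearMap.funLeft ℂ ℂ (fun q => (q.1.1, q.2))
  let Ψ : (H.ConnectedComponent × Fin n → ℂ) →ₗ[ℂ] (↥S × Fin n → ℂ) := π ∘ₗ (L ∘ₗ Φ)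
  have hker : ∀ ξ ∈ LinearMap.ker Ψ, L (Φ ξ) = 0 := by
    intro ξ hξ
    funext q
    obtain ⟨v, i⟩ := q
    by_cases hv : v ∈ S
    · exact congrFun (LinearMap.mem_ker.mp hξ) (⟨v, hv⟩, i)
    · exact hLΦ ξ v i hv
  have hle : Submodule.map Φ (LinearMap.ker Ψ) ≤ LinearMap.ker L := by
    rintro x ⟨ξ, hξ, rfl⟩
    exact LinearMap.mem_ker.mpr (hker ξ hξ)
  have h1 : Module.finrank ℂ (LinearMap.ker Ψ) ≤ Module.finrank ℂ (LinearMap.ker L) := by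
    calc Module.finrank ℂ (LinearMap.ker Ψ)
        = Module.finrank ℂ (Submodule.map Φ (LinearMap.ker Ψ)) :=
          (Submodule.equivMapOfInjective Φ hΦinj _).finrank_eq
      _ ≤ Module.finrank ℂ (LinearMap.ker L) := Submodule.finrank_mono hle
  have hrn := LinearMap.finrank_range_add_finrank_ker Ψ
  have hdom : Module.finrank ℂ (H.ConnectedComponent × Fin n → ℂ)
      = Fintype.card H.ConnectedComponent * n := by
    rw [Module.finrank_fintype_fun_eq_card]
    simp [Fintype.card_prod]
  have hcod : Module.finrank ℂ (↥S × Fin n → ℂ) = S.ncard * n := by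
    rw [Module.finrank_fintype_fun_eq_card]
    rw [Fintype.card_prod, Fintype.card_fin]
    congr 1
    rw [← Nat.card_eq_fintype_card, Nat.card_coe_set_eq]
  have hrange : Module.finrank ℂ (LinearMap.range Ψ) ≤ S.ncard * n := by
    rw [← hcod]
    exact Submodule.finrank_le _
  rw [hdom] at hrn
  have hfinal : ∀ a b r k : ℕ, r + k = a → r ≤ b → a - b ≤ k := by omega
  have h2 : Fintype.card H.ConnectedComponent * n - S.ncard * n
      ≤ Module.finrank ℂ (LinearMap.ker Ψ) :=
    hfinal _ _ _ _ hrn hrange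
  have harith : n * (Nat.card H.ConnectedComponent - S.ncard)
      = Fintype.card H.ConnectedComponent * n - S.ncard * n := by
    rw [Nat.card_eq_fintype_card, mul_comm n _, Nat.sub_mul]
  rw [harith]
  exact le_trans h2 h1
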